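/- Let D be a bipartite tournament of order n. There exists a tournament completion of D with exactly one augmented 3-dicycle if and only if D is acyclic and D is isomorphic to neither D_{X^1_n} nor D_{X^2_n}. -/

import Mathlib

/-- `f` gives the partite set (as a `Bool`) of each vertex; `A` is the arc relation.
`IsBipTournament f A` says `A` is an orientation of the complete bipartite graph with
(nonempty) partite sets `f ⁻¹ true` and `f ⁻¹ false`. -/
def IsBipTournament {V : Type*} (f : V → Bool) (A : V → V → Prop) : Prop :=
  (∃ v, f v = true) ∧ (∃ v, f v = false) ∧
  (∀ u v, f u = f v → ¬ A u v) ∧ (∀ u v, f u ≠ f v → (A u v ↔ ¬ A v u))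

/-- `T` is a tournament (on the whole vertex type). -/
def IsTournament {V : Type*} (T : V → V → Prop) : Prop :=
  (∀ v, ¬ T v v) ∧ ∀ u v, u ≠ v → (T u v ↔ ¬ T v u)

/-- `T` is a tournament completion of the digraph with arc relation `A`. -/
def IsCompletion {V : Type*} (A T : V → V → Prop) : Prop :=
  IsTournament T ∧ ∀ u v, A u v → T u v
/-- Cyclic successor in `Fin k`. -/
def cyc {k : ℕ} (i : Fin k) : Fin k :=
  ⟨(i.val + 1) % k, Nat.mod_lt _ (lt_of_le_of_lt (Nat.zero_le _) i.isLt)⟩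

/-- `c` lists the vertices of a directed cycle of length `k` in the digraph `A`. -/
def IsDicycle {V : Type*} (A : V → V → Prop) (k : ℕ) (c : Fin k → V) : Prop :=
  2 ≤ k ∧ Function.Injective c ∧ ∀ i, A (c i) (c (cyc i))

/-- The digraph `A` has no directed cycle. -/
def Acyclic {V : Type*} (A : V → V → Prop) : Prop :=
  ¬ ∃ (k : ℕ) (c : Fin k → V), IsDicycle A k c
/-- Increasing enumeration (0-indexed) of `{6i-5, 6i-3, 6i-2, 6i | i ∈ ℤ⁺}`,
i.e. `1, 3, 4, 6, 7, 9, 10, 12, …`; the set `X¹ₙ` consists of `x1fun 0, …, x1fun (n-1)`. -/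
def x1fun (i : ℕ) : ℕ := 6 * (i / 4) + [1, 3, 4, 6].getD (i % 4) 0

/-- Increasing enumeration (0-indexed) of `{6i-5, 6i-4, 6i-2, 6i-1 | i ∈ ℤ⁺}`,
i.e. `1, 2, 4, 5, 7, 8, 10, 11, …`; the set `X²ₙ` consists of `x2fun 0, …, x2fun (n-1)`. -/
def x2fun (i : ℕ) : ℕ := 6 * (i / 4) + [1, 2, 4, 5].getD (i % 4) 0

/-- `c` is an augmented 3-dicycle of a completion `T` of `A`: a directed 3-cycle of
`T` using at least one arc not in `A`. -/
def Aug3 {V : Type*} (A T : V → V → Prop) (c : Fin 3 → V) : Prop :=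
  Function.Injective c ∧ (∀ i, T (c i) (c (i + 1))) ∧ ∃ i, ¬ A (c i) (c (i + 1))

def Brel {n : ℕ} (p : Fin n → Bool) : Fin n → Fin n → Prop :=
  fun i j => (i : ℕ) < (j : ℕ) ∧ p i ≠ p j

lemma ranges_ne {W : Type*} {x w w' y : W} (hww' : w ≠ w') (hwx : w ≠ x) (hwy : w ≠ y) :
    Set.range ![x, w, y] ≠ Set.range ![x, w', y] := by
  intro hR
  have hw : w ∈ Set.range ![x, w', y] := hR ▸ ⟨1, by simp⟩
  obtain ⟨i, hi⟩ := hw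
  fin_cases i <;> simp_all

lemma tri3_inj {W : Type*} {x w y : W} (h1 : x ≠ w) (h2 : w ≠ y) (h3 : x ≠ y) :
    Function.Injective ![x, w, y] := by
  intro i j hij
  fin_cases i <;> fin_cases j <;> simp_all

/-- A 3-cycle of `T` lying above `Brel p` (with vertices `x < w < y` by value,
back arc `T y x`) is an augmented 3-cycle. -/
lemma tri3_aug {n : ℕ} (p : Fin n → Bool) (T : Fin n → Fin n → Prop)
    {x w y : Fin n} (hxw : (x : ℕ) < w) (hwy : (w : ℕ) < y)
    (h1 : T x w) (h2 : T w y) (h3 : T y x) :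
    Aug3 (Brel p) T ![x, w, y] := by
  have hne1 : x ≠ w := by intro h; subst h; omega
  have hne2 : w ≠ y := by intro h; subst h; omega
  have hne3 : x ≠ y := by intro h; subst h; omega
  refine ⟨tri3_inj hne1 hne2 hne3, ?_, ⟨2, ?_⟩⟩
  · intro i; fin_cases i <;> simpa
  · show ¬ Brel p _ _
    simp only [Brel]
    have : (![x, w, y] 2 : Fin n) = y := by simp
    have h0 : (![x, w, y] (2 + 1) : Fin n) = x := by
      rw [show ((2 : Fin 3) + 1) = 0 from rfl]; simp
    rw [this, h0]
    omega

lemma far {n : ℕ} (p : Fin n → Bool)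
    (halt : ∀ k (hk : k + 2 < n), p ⟨k, by omega⟩ ≠ p ⟨k + 2, hk⟩)
    (T : Fin n → Fin n → Prop) (hT : IsCompletion (Brel p) T)
    (hu : ∀ c' d' : Fin 3 → Fin n, Aug3 (Brel p) T c' → Aug3 (Brel p) T d' →
      Set.range c' = Set.range d')
    {x y : Fin n} (hxy : (x : ℕ) < y) (hne1 : (y : ℕ) ≠ (x : ℕ) + 1) (hpp : p x = p y)
    (hTyx : T y x) : False := by
  have hyn : (y : ℕ) < n := y.isLt
  have hx2n : (x : ℕ) + 2 < n := by omega
  have hxeta : ∀ (h : (x:ℕ) < n), (⟨(x:ℕ), h⟩ : Fin n) = x := fun _ => rfl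
  have hy3 : (x : ℕ) + 3 ≤ y := by
    rcases Nat.lt_or_ge ((x:ℕ) + 2) y with h | h
    · omega
    · exfalso
      have hy2 : ((x:ℕ) + 2) = (y:ℕ) := by omega
      have : y = ⟨(x:ℕ) + 2, hx2n⟩ := by apply Fin.ext; simp [hy2.symm]
      rw [this] at hpp
      exact (halt (x:ℕ) hx2n) (by rw [hxeta] at *; exact hpp)
  have hpw : p ⟨(x:ℕ) + 2, hx2n⟩ ≠ p x := by
    have := halt (x:ℕ) hx2n
    rw [hxeta] at this
    exact fun hh => this hh.symm
  have mk : ∀ z : Fin n, (x : ℕ) < z → (z : ℕ) < y → p z ≠ p x →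
      Aug3 (Brel p) T ![x, z, y] := by
    intro z h1 h2 h3
    refine tri3_aug p T h1 h2 (hT.2 _ _ ⟨h1, fun he => h3 he.symm⟩)
      (hT.2 _ _ ⟨h2, ?_⟩) hTyx
    rw [← hpp]; exact h3
  have key : ∃ w' : Fin n, (x : ℕ) < w' ∧ (w' : ℕ) < y ∧ p w' ≠ p x ∧
      (w' : ℕ) ≠ (x : ℕ) + 2 := by
    by_cases hp1 : p ⟨(x:ℕ) + 1, by omega⟩ = p x
    · have h3y : (x : ℕ) + 3 < y := by
        rcases Nat.lt_or_ge ((x:ℕ) + 3) y with h | h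
        · exact h
        · exfalso
          have h3n : (x:ℕ) + 3 < n := by omega
          have hy3' : (x:ℕ) + 3 = (y:ℕ) := by omega
          have hyis : y = ⟨(x:ℕ) + 3, h3n⟩ := by apply Fin.ext; simp [hy3'.symm]
          have h13 : p ⟨(x:ℕ) + 1, by omega⟩ ≠ p ⟨(x:ℕ) + 3, h3n⟩ := halt ((x:ℕ) + 1) (by omega)
          rw [hp1, ← hyis] at h13
          exact h13 hpp
      have h3n : (x:ℕ) + 3 < n := by omega
      refine ⟨⟨(x:ℕ) + 3, h3n⟩, by show (x:ℕ) < (x:ℕ) + 3; omega,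
        by show (x:ℕ) + 3 < (y:ℕ); omega, ?_, by show (x:ℕ) + 3 ≠ (x:ℕ) + 2; omega⟩
      have h13 : p ⟨(x:ℕ) + 1, by omega⟩ ≠ p ⟨(x:ℕ) + 3, h3n⟩ := halt ((x:ℕ) + 1) (by omega)
      rw [hp1] at h13
      exact fun hh => h13 hh.symm
    · exact ⟨⟨(x:ℕ) + 1, by omega⟩, by show (x:ℕ) < (x:ℕ) + 1; omega,
        by show (x:ℕ) + 1 < (y:ℕ); omega, hp1, by show (x:ℕ) + 1 ≠ (x:ℕ) + 2; omega⟩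
  obtain ⟨w', hw1, hw2, hw3, hw4⟩ := key
  have t1 := mk ⟨(x:ℕ) + 2, hx2n⟩ (by show (x:ℕ) < (x:ℕ) + 2; omega)
    (by show (x:ℕ) + 2 < (y:ℕ); omega) hpw
  have t2 := mk w' hw1 hw2 hw3
  refine ranges_ne (x := x) (w := (⟨(x:ℕ) + 2, hx2n⟩ : Fin n)) (w' := w') (y := y)
    ?_ ?_ ?_ (hu _ _ t1 t2)
  · intro hh; exact hw4 (by rw [← hh])
  · intro hh
    have h2 : (x:ℕ) + 2 = (x:ℕ) := congrArg Fin.val hh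
    omega
  · intro hh
    have h2 : (x:ℕ) + 2 = (y:ℕ) := congrArg Fin.val hh
    omega

lemma core_II {n : ℕ} (p : Fin n → Bool)
    (halt : ∀ k (hk : k + 2 < n), p ⟨k, by omega⟩ ≠ p ⟨k + 2, hk⟩)
    (T : Fin n → Fin n → Prop) (hT : IsCompletion (Brel p) T)
    (c : Fin 3 → Fin n) (hc : Aug3 (Brel p) T c)
    (hu0 : ∀ c', Aug3 (Brel p) T c' → Set.range c' = Set.range c) : False := by
  have hu : ∀ c' d' : Fin 3 → Fin n, Aug3 (Brel p) T c' → Aug3 (Brel p) T d' →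
      Set.range c' = Set.range d' := fun c' d' h1 h2 => (hu0 c' h1).trans (hu0 d' h2).symm
  obtain ⟨cinj, harc, -⟩ := hc
  have fadd1 : ∀ i : Fin 3, i + 1 + 1 = i + 2 := by decide
  have fadd2 : ∀ i : Fin 3, i + 2 + 1 = i := by decide
  have i01 : ∀ i : Fin 3, i ≠ i + 1 := by decide
  have i02 : ∀ i : Fin 3, i ≠ i + 2 := by decide
  have i12 : ∀ i : Fin 3, i + 1 ≠ i + 2 := by decide
  obtain ⟨i0, hback⟩ : ∃ i : Fin 3, (c (i + 1) : ℕ) < c i := by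
    by_contra hcon
    push_neg at hcon
    have e0 := hcon 0
    have e1 := hcon 1
    have e2 := hcon 2
    rw [show ((0 : Fin 3) + 1) = 1 from rfl] at e0
    rw [show ((1 : Fin 3) + 1) = 2 from rfl] at e1
    rw [show ((2 : Fin 3) + 1) = 0 from rfl] at e2
    have n0 : c 0 ≠ c 1 := fun h => i01 0 (cinj h)
    have n1 : c 1 ≠ c 2 := fun h => (i01 1) (cinj h)
    have n2 : c 2 ≠ c 0 := fun h => (i02 0) (cinj h).symm
    have v0 : (c 0 : ℕ) ≠ c 1 := fun h => n0 (Fin.ext h)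
    have v1 : (c 1 : ℕ) ≠ c 2 := fun h => n1 (Fin.ext h)
    have v2 : (c 2 : ℕ) ≠ c 0 := fun h => n2 (Fin.ext h)
    omega
  have hTab : T (c i0) (c (i0 + 1)) := harc i0
  have hTbt : T (c (i0 + 1)) (c (i0 + 2)) := by have := harc (i0 + 1); rwa [fadd1] at this
  have hTta : T (c (i0 + 2)) (c i0) := by have := harc (i0 + 2); rwa [fadd2] at this
  set a := c i0 with ha
  set b := c (i0 + 1) with hb
  set t := c (i0 + 2) with ht
  have pmono : ∀ u v : Fin n, T u v → (v : ℕ) < (u : ℕ) → p u = p v := by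
    intro u v hTuv hvu
    by_contra hpuv
    have hTvu := hT.2 _ _ ⟨hvu, fun h => hpuv h.symm⟩
    have hune : u ≠ v := fun h => by subst h; omega
    exact ((hT.1.2 u v hune).mp hTuv) hTvu
  have hpab : p a = p b := pmono _ _ hTab hback
  by_cases hone : (a : ℕ) = (b : ℕ) + 1
  · have htb : t ≠ b := fun h => (i12 i0) (cinj h).symm
    have hta : t ≠ a := fun h => (i02 i0) (cinj h).symm
    have htbv : (t : ℕ) ≠ b := fun h => htb (Fin.ext h)
    have htav : (t : ℕ) ≠ a := fun h => hta (Fin.ext h)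
    rcases Nat.lt_or_ge (t : ℕ) (b : ℕ) with hlt | hge
    · have hpbt : p b = p t := pmono _ _ hTbt hlt
      by_cases h1 : (b : ℕ) = (t : ℕ) + 1
      · have h2n : (t : ℕ) + 2 < n := by have := a.isLt; omega
        apply halt (t : ℕ) h2n
        have hEa : (⟨(t : ℕ) + 2, h2n⟩ : Fin n) = a := Fin.ext (by show (t:ℕ)+2 = (a:ℕ); omega)
        rw [hEa]
        show p t = p a
        exact hpbt.symm.trans hpab.symm
      · exact far p halt T hT hu hlt h1 hpbt.symm hTbt
    · have hat : (a : ℕ) < t := by omega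
      have hpta : p t = p a := pmono _ _ hTta hat
      by_cases h1 : (t : ℕ) = (a : ℕ) + 1
      · have h2n : (b : ℕ) + 2 < n := by have := t.isLt; omega
        apply halt (b : ℕ) h2n
        have hEt : (⟨(b : ℕ) + 2, h2n⟩ : Fin n) = t := Fin.ext (by show (b:ℕ)+2 = (t:ℕ); omega)
        rw [hEt]
        show p b = p t
        exact hpab.symm.trans hpta.symm
      · exact far p halt T hT hu hat h1 hpta.symm hTta
  · exact far p halt T hT hu hback hone hpab.symm hTab

lemma back3 {n : ℕ} (c : Fin 3 → Fin n) (cinj : Function.Injective c) :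
    ∃ i : Fin 3, (c (i + 1) : ℕ) < c i := by
  by_contra hcon
  push_neg at hcon
  have e0 := hcon 0
  have e1 := hcon 1
  have e2 := hcon 2
  rw [show ((0 : Fin 3) + 1) = 1 from rfl] at e0
  rw [show ((1 : Fin 3) + 1) = 2 from rfl] at e1
  rw [show ((2 : Fin 3) + 1) = 0 from rfl] at e2
  have v0 : (c 0 : ℕ) ≠ c 1 := fun h => (by decide : (0 : Fin 3) ≠ 1) (cinj (Fin.ext h))
  have v1 : (c 1 : ℕ) ≠ c 2 := fun h => (by decide : (1 : Fin 3) ≠ 2) (cinj (Fin.ext h))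
  have v2 : (c 2 : ℕ) ≠ c 0 := fun h => (by decide : (2 : Fin 3) ≠ 0) (cinj (Fin.ext h))
  omega

lemma range3 {W : Type*} (d : Fin 3 → W) (j : Fin 3) :
    Set.range d = {d j, d (j + 1), d (j + 2)} := by
  have cover : ∀ i j : Fin 3, i = j ∨ i = j + 1 ∨ i = j + 2 := by decide
  ext z
  constructor
  · rintro ⟨i, rfl⟩
    rcases cover i j with h | h | h <;> rw [h] <;> simp [Set.mem_insert_iff]
  · intro hz
    rcases hz with h | h | h
    · exact ⟨j, h.symm⟩
    · exact ⟨j + 1, h.symm⟩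
    · exact ⟨j + 2, h.symm⟩

lemma core_I {n : ℕ} (p : Fin n → Bool) (k : ℕ) (hk : k + 2 < n)
    (hpk : p ⟨k, by omega⟩ = p ⟨k + 2, hk⟩) :
    ∃ T, IsCompletion (Brel p) T ∧ ∃ c, Aug3 (Brel p) T c ∧
      ∀ c', Aug3 (Brel p) T c' → Set.range c' = Set.range c := by
  have fadd1 : ∀ i : Fin 3, i + 1 + 1 = i + 2 := by decide
  have fadd2 : ∀ i : Fin 3, i + 2 + 1 = i := by decide
  set K0 : Fin n := ⟨k, by omega⟩ with hK0
  set K1 : Fin n := ⟨k + 1, by omega⟩ with hK1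
  set K2 : Fin n := ⟨k + 2, hk⟩ with hK2
  have eK0 : (K0 : ℕ) = k := rfl
  have eK1 : (K1 : ℕ) = k + 1 := rfl
  have eK2 : (K2 : ℕ) = k + 2 := rfl
  refine ⟨fun i j => ((i : ℕ) < j ∧ ¬(i = K0 ∧ j = K2)) ∨ (i = K2 ∧ j = K0), ⟨⟨?_, ?_⟩, ?_⟩,
    ![K0, K1, K2], ?_, ?_⟩
  · -- irreflexive
    rintro v (⟨h, -⟩ | ⟨h1, h2⟩)
    · omega
    · rw [h1] at h2
      have : (K2 : ℕ) = K0 := congrArg Fin.val h2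
      omega
  · -- asymmetric/total
    intro u v huv
    have hval : (u : ℕ) ≠ v := fun h => huv (Fin.ext h)
    simp only [Fin.ext_iff, eK0, eK2]
    omega
  · -- completion
    rintro u v ⟨hlt, hpne⟩
    left
    refine ⟨hlt, ?_⟩
    rintro ⟨hu, hv⟩
    rw [hu, hv] at hpne
    exact hpne hpk
  · -- the triangle is augmented
    refine tri3_aug p _ (by omega) (by omega) ?_ ?_ ?_
    · exact Or.inl ⟨by omega, fun hh => by have := congrArg Fin.val hh.2; omega⟩
    · exact Or.inl ⟨by omega, fun hh => by have := congrArg Fin.val hh.1; omega⟩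
    · exact Or.inr ⟨rfl, rfl⟩
  · -- uniqueness
    rintro c' ⟨cinj, harc, -⟩
    obtain ⟨i0, hback⟩ := back3 c' cinj
    have hTab := harc i0
    have hTbm := harc (i0 + 1)
    rw [fadd1 i0] at hTbm
    have hTma := harc (i0 + 2)
    rw [fadd2 i0] at hTma
    have hae : c' i0 = K2 ∧ c' (i0 + 1) = K0 := by
      rcases hTab with ⟨h, -⟩ | ⟨h1, h2⟩
      · omega
      · exact ⟨h1, h2⟩
    obtain ⟨ha2, hb0⟩ := hae
    rw [hb0] at hTbm
    rw [ha2] at hTma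
    have hm1 : c' (i0 + 2) = K1 := by
      have hi1 : (c' (i0 + 2) : ℕ) > k ∧ c' (i0 + 2) ≠ K2 := by
        rcases hTbm with ⟨h, hn⟩ | ⟨h1, h2⟩
        · exact ⟨h, fun hh => hn ⟨rfl, hh⟩⟩
        · exfalso; have := congrArg Fin.val h2; omega
      have hi2 : (c' (i0 + 2) : ℕ) < k + 2 := by
        rcases hTma with ⟨h, -⟩ | ⟨h1, -⟩
        · exact h
        · exfalso; have := congrArg Fin.val h1; omega
      apply Fin.ext
      have hne2 : (c' (i0 + 2) : ℕ) ≠ k + 2 := fun hh => hi1.2 (Fin.ext hh)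
      show (c' (i0 + 2) : ℕ) = k + 1
      omega
    have hrc : Set.range ![K0, K1, K2] = ({K0, K1, K2} : Set (Fin n)) := by
      rw [range3 ![K0, K1, K2] 0]
      rw [show ((0 : Fin 3) + 1) = 1 from rfl, show ((0 : Fin 3) + 2) = 2 from rfl]
      simp [Matrix.cons_val_zero, Matrix.cons_val_one, Matrix.head_cons]
    have fadd3 : ∀ i : Fin 3, i + 1 + 2 = i := by decide
    rw [range3 c' (i0 + 1), fadd1 i0, fadd3 i0, ha2, hb0, hm1, hrc]

lemma transport {V W : Type*} (e : V ≃ W) (A : V → V → Prop) (A' : W → W → Prop)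
    (hA : ∀ u v, A u v ↔ A' (e u) (e v)) :
    (∃ T', IsCompletion A' T' ∧ ∃ c', Aug3 A' T' c' ∧
      ∀ d, Aug3 A' T' d → Set.range d = Set.range c') →
    ∃ T, IsCompletion A T ∧ ∃ c, Aug3 A T c ∧
      ∀ d, Aug3 A T d → Set.range d = Set.range c := by
  rintro ⟨T', ⟨⟨hirr, hasym⟩, hcomp⟩, c', hc', hu'⟩
  refine ⟨fun u v => T' (e u) (e v),
    ⟨⟨fun v hv => hirr _ hv, fun u v huv => hasym _ _ (fun hh => huv (e.injective hh))⟩,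
      fun u v hA' => hcomp _ _ ((hA u v).mp hA')⟩, e.symm ∘ c', ?_, ?_⟩
  · obtain ⟨ci, ca, i, hi⟩ := hc'
    refine ⟨e.symm.injective.comp ci, ?_, ⟨i, ?_⟩⟩
    · intro j
      show T' (e (e.symm (c' j))) (e (e.symm (c' (j + 1))))
      simpa [Equiv.apply_symm_apply] using ca j
    · show ¬ A (e.symm (c' i)) (e.symm (c' (i + 1)))
      rw [hA]
      simpa [Equiv.apply_symm_apply] using hi
  · rintro d ⟨di, da, i, hi⟩
    have hd' : Aug3 A' T' (e ∘ d) := by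
      exact ⟨e.injective.comp di, fun j => da j, ⟨i, fun hh => hi ((hA _ _).mpr hh)⟩⟩
    have hr := hu' _ hd'
    have h1 : Set.range (e ∘ d) = e '' Set.range d := Set.range_comp e d
    have h2 : Set.range c' = e '' Set.range (e.symm ∘ c') := by
      rw [Set.range_comp, ← Set.image_comp]
      simp
    rw [h1, h2] at hr
    exact Set.image_injective.mpr e.injective hr

lemma mono3 {V : Type*} (f : V → Bool) (c : Fin 3 → V) :
    ∃ i : Fin 3, f (c i) = f (c (i + 1)) := by
  by_cases h01 : f (c 0) = f (c 1)
  · exact ⟨0, h01⟩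
  by_cases h12 : f (c 1) = f (c 2)
  · exact ⟨1, h12⟩
  · refine ⟨2, ?_⟩
    show f (c 2) = f (c (2 + 1))
    rw [show ((2 : Fin 3) + 1) = 0 from rfl]
    revert h01 h12
    cases hv0 : f (c 0) <;> cases hv1 : f (c 1) <;> cases hv2 : f (c 2) <;> simp

lemma x1mod (m : ℕ) : x1fun m % 2 = if m % 4 ≤ 1 then 1 else 0 := by
  have h4 : m % 4 = 0 ∨ m % 4 = 1 ∨ m % 4 = 2 ∨ m % 4 = 3 := by omega
  rcases h4 with h | h | h | h <;> simp [x1fun, h] <;> omega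

lemma x2mod (m : ℕ) : x2fun m % 2 = if m % 4 = 0 ∨ m % 4 = 3 then 1 else 0 := by
  have h4 : m % 4 = 0 ∨ m % 4 = 1 ∨ m % 4 = 2 ∨ m % 4 = 3 := by omega
  rcases h4 with h | h | h | h <;> simp [x2fun, h] <;> omega

lemma x1sm : StrictMono x1fun := by
  apply strictMono_nat_of_lt_succ
  intro m
  have h4 : m % 4 = 0 ∨ m % 4 = 1 ∨ m % 4 = 2 ∨ m % 4 = 3 := by omega
  rcases h4 with h | h | h | h
  · have e1 : (m + 1) % 4 = 1 := by omega
    have e2 : (m + 1) / 4 = m / 4 := by omega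
    simp [x1fun, h, e1, e2]
  · have e1 : (m + 1) % 4 = 2 := by omega
    have e2 : (m + 1) / 4 = m / 4 := by omega
    simp [x1fun, h, e1, e2]
  · have e1 : (m + 1) % 4 = 3 := by omega
    have e2 : (m + 1) / 4 = m / 4 := by omega
    simp [x1fun, h, e1, e2]
  · have e1 : (m + 1) % 4 = 0 := by omega
    have e2 : (m + 1) / 4 = m / 4 + 1 := by omega
    simp [x1fun, h, e1, e2]
    omega

lemma x2sm : StrictMono x2fun := by
  apply strictMono_nat_of_lt_succ
  intro m
  have h4 : m % 4 = 0 ∨ m % 4 = 1 ∨ m % 4 = 2 ∨ m % 4 = 3 := by omega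
  rcases h4 with h | h | h | h
  · have e1 : (m + 1) % 4 = 1 := by omega
    have e2 : (m + 1) / 4 = m / 4 := by omega
    simp [x2fun, h, e1, e2]
  · have e1 : (m + 1) % 4 = 2 := by omega
    have e2 : (m + 1) / 4 = m / 4 := by omega
    simp [x2fun, h, e1, e2]
  · have e1 : (m + 1) % 4 = 3 := by omega
    have e2 : (m + 1) / 4 = m / 4 := by omega
    simp [x2fun, h, e1, e2]
  · have e1 : (m + 1) % 4 = 0 := by omega
    have e2 : (m + 1) / 4 = m / 4 + 1 := by omega
    simp [x2fun, h, e1, e2]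
    omega

lemma x1alt (k : ℕ) : x1fun k % 2 ≠ x1fun (k + 2) % 2 := by
  rw [x1mod, x1mod]
  split_ifs with h1 h2 h2 <;> omega

lemma x2alt (k : ℕ) : x2fun k % 2 ≠ x2fun (k + 2) % 2 := by
  rw [x2mod, x2mod]
  split_ifs with h1 h2 h2 <;> omega

lemma pattern {n : ℕ} (p : Fin n → Bool)
    (halt : ∀ k (hk : k + 2 < n), p ⟨k, by omega⟩ ≠ p ⟨k + 2, hk⟩) :
    ∃ g : ℕ → ℕ, (g = x1fun ∨ g = x2fun) ∧
      ∀ i j : Fin n, (p i ≠ p j ↔ g i % 2 ≠ g j % 2) := by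
  rcases Nat.lt_or_ge n 2 with hn | hn
  · refine ⟨x1fun, Or.inl rfl, ?_⟩
    intro i j
    have hij : i = j := by
      apply Fin.ext
      have := i.isLt
      have := j.isLt
      omega
    subst hij
    simp
  · have h0 : 0 < n := by omega
    set a := p ⟨0, h0⟩ with ha
    set b := p ⟨1, hn⟩ with hb
    have key : ∀ m (hm : m < n), p ⟨m, hm⟩ =
        (if m % 4 = 0 then a else if m % 4 = 1 then b else if m % 4 = 2 then !a else !b) := by
      intro m
      induction m using Nat.strong_induction_on with
      | _ m ih =>
        intro hm
        match m with
        | 0 => simp [ha]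
        | 1 => simp [hb]
        | (m' + 2) =>
          have hrec := ih m' (by omega) (by omega)
          have hstep := halt m' hm
          have hflip : p ⟨m' + 2, hm⟩ = ! p ⟨m', by omega⟩ := by
            cases hv1 : p ⟨m', by omega⟩ <;> cases hv2 : p ⟨m' + 2, hm⟩ <;> simp_all
          rw [hflip, hrec]
          have h4 : m' % 4 = 0 ∨ m' % 4 = 1 ∨ m' % 4 = 2 ∨ m' % 4 = 3 := by omega
          rcases h4 with h | h | h | h
          · rw [h, (by omega : (m' + 2) % 4 = 2)]
            simp
          · rw [h, (by omega : (m' + 2) % 4 = 3)]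
            simp
          · rw [h, (by omega : (m' + 2) % 4 = 0)]
            simp
          · rw [h, (by omega : (m' + 2) % 4 = 1)]
            simp
    by_cases hab : a = b
    · refine ⟨x1fun, Or.inl rfl, ?_⟩
      intro i j
      have hi : p i = _ := key i.1 i.isLt
      have hj : p j = _ := key j.1 j.isLt
      rw [hi, hj, x1mod, x1mod, ← hab]
      have h4i : i.1 % 4 = 0 ∨ i.1 % 4 = 1 ∨ i.1 % 4 = 2 ∨ i.1 % 4 = 3 := by omega
      have h4j : j.1 % 4 = 0 ∨ j.1 % 4 = 1 ∨ j.1 % 4 = 2 ∨ j.1 % 4 = 3 := by omega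
      rcases h4i with h | h | h | h <;> rcases h4j with h' | h' | h' | h' <;>
        rw [h, h'] <;> cases hv : a <;> simp
    · have hba : b = !a := Bool.eq_not_iff.mpr (fun hh => hab hh.symm)
      refine ⟨x2fun, Or.inr rfl, ?_⟩
      intro i j
      have hi : p i = _ := key i.1 i.isLt
      have hj : p j = _ := key j.1 j.isLt
      rw [hi, hj, x2mod, x2mod, hba]
      have h4i : i.1 % 4 = 0 ∨ i.1 % 4 = 1 ∨ i.1 % 4 = 2 ∨ i.1 % 4 = 3 := by omega
      have h4j : j.1 % 4 = 0 ∨ j.1 % 4 = 1 ∨ j.1 % 4 = 2 ∨ j.1 % 4 = 3 := by omega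
      rcases h4i with h | h | h | h <;> rcases h4j with h' | h' | h' | h' <;>
        rw [h, h'] <;> cases hv : a <;> simp

lemma closed_walk_cycle {V : Type*} {f : V → Bool} {A : V → V → Prop} (h : IsBipTournament f A) :
    ∀ k, 1 ≤ k → ∀ c : ℕ → V, (∀ i < k, A (c i) (c (i + 1))) → c k = c 0 →
      ∃ m : ℕ, ∃ d : Fin m → V, IsDicycle A m d := by
  intro k
  induction k using Nat.strong_induction_on with
  | _ k ih =>
    intro hk c hw hcl
    by_cases hdup : ∃ i j, i < j ∧ j < k ∧ c i = c j
    · obtain ⟨i, j, hij, hjk, hec⟩ := hdup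
      refine ih (j - i) (by omega) (by omega) (fun m => c (i + m)) ?_ ?_
      · intro l hl
        exact hw (i + l) (by omega)
      · show c (i + (j - i)) = c (i + 0)
        rw [show i + (j - i) = j by omega, Nat.add_zero]
        exact hec.symm
    · push_neg at hdup
      have hk2 : 2 ≤ k := by
        by_contra h2
        have hk1 : k = 1 := by omega
        have ha := hw 0 (by omega)
        rw [show (0 : ℕ) + 1 = k by omega, hcl] at ha
        exact h.2.2.1 _ _ rfl ha
      refine ⟨k, fun i => c i.1, hk2, ?_, ?_⟩
      · intro i j hij
        by_contra hne
        rcases Nat.lt_or_ge i.1 j.1 with hlt | hge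
        · exact hdup i.1 j.1 hlt j.isLt hij
        · have hne' : j.1 < i.1 := by
            rcases Nat.lt_or_ge j.1 i.1 with h' | h'
            · exact h'
            · exact absurd (Fin.ext (by omega : i.1 = j.1)) hne
          exact hdup j.1 i.1 hne' i.isLt hij.symm
      · intro i
        show A (c i.1) (c ((i.1 + 1) % k))
        rcases Nat.lt_or_ge (i.1 + 1) k with hlt | hge
        · rw [Nat.mod_eq_of_lt hlt]
          exact hw i.1 i.isLt
        · have hik : i.1 + 1 = k := by have := i.isLt; omega
          rw [hik, Nat.mod_self]
          have ha := hw i.1 i.isLt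
          rwa [hik, hcl] at ha

lemma tg_walk {V : Type*} {A : V → V → Prop} {u v : V} (h : Relation.TransGen A u v) :
    ∃ k : ℕ, ∃ c : ℕ → V, 1 ≤ k ∧ c 0 = u ∧ c k = v ∧ ∀ i < k, A (c i) (c (i + 1)) := by
  induction h with
  | single hb =>
    rename_i b
    refine ⟨1, fun m => if m = 0 then u else b, by omega, by simp, by simp, ?_⟩
    intro i hi
    have hi0 : i = 0 := by omega
    subst hi0
    simpa using hb
  | tail htg hbc ih =>
    rename_i b d
    obtain ⟨k, c, hk, h0, hkv, hwk⟩ := ih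
    refine ⟨k + 1, fun m => if m = k + 1 then d else c m, by omega, ?_, by simp, ?_⟩
    · simp only [if_neg (by omega : ¬ (0 = k + 1))]
      exact h0
    · intro i hi
      by_cases hik : i = k
      · subst hik
        simp only [if_neg (by omega : ¬ (i = i + 1)), if_pos rfl]
        rwa [hkv]
      · have hi1 : i < k := by omega
        simp only [if_neg (by omega : ¬ (i = k + 1)), if_neg (by omega : ¬ (i + 1 = k + 1))]
        exact hwk i hi1

lemma acyclic_noTG {V : Type*} {f : V → Bool} {A : V → V → Prop} (h : IsBipTournament f A)
    (hac : Acyclic A) : ∀ u, ¬ Relation.TransGen A u u := by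
  intro u htg
  obtain ⟨k, c, hk, h0, hkv, hw⟩ := tg_walk htg
  exact hac (closed_walk_cycle h k hk c hw (by rw [hkv, h0]))

lemma toFour {V : Type*} {f : V → Bool} {A : V → V → Prop} (h : IsBipTournament f A) :
    ∀ k (c : Fin k → V), IsDicycle A k c → ∃ d : Fin 4 → V, IsDicycle A 4 d := by
  intro k
  induction k using Nat.strong_induction_on with
  | _ k ih =>
    intro c hd
    obtain ⟨hk2, cinj, carc⟩ := hd
    have hfne : ∀ u v, A u v → f u ≠ f v := fun u v hA hf => h.2.2.1 u v hf hA
    have hcyc : ∀ (m : ℕ) (hm : m < k) (hm1 : m + 1 < k),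
        cyc (⟨m, hm⟩ : Fin k) = ⟨m + 1, hm1⟩ := fun m hm hm1 => Fin.ext (Nat.mod_eq_of_lt hm1)
    have hinj : ∀ (i j : ℕ) (hi : i < k) (hj : j < k), i ≠ j →
        c ⟨i, hi⟩ ≠ c ⟨j, hj⟩ := by
      intro i j hi hj hij heq
      exact hij (congrArg Fin.val (cinj heq))
    rcases Nat.lt_or_ge k 5 with h5 | h5
    · interval_cases k
      · -- k = 2
        have a01 := carc ⟨0, by omega⟩
        have a10 := carc ⟨1, by omega⟩
        rw [show cyc (⟨0, by omega⟩ : Fin 2) = ⟨1, by omega⟩ by apply Fin.ext; norm_num [cyc]] at a01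
        rw [show cyc (⟨1, by omega⟩ : Fin 2) = ⟨0, by omega⟩ by apply Fin.ext; norm_num [cyc]] at a10
        exact absurd a10 ((h.2.2.2 _ _ (hfne _ _ a01)).mp a01)
      · -- k = 3
        obtain ⟨i, hfi⟩ := mono3 f c
        have hc3 : cyc i = i + 1 := by
          apply Fin.ext
          have h3 : i.1 < 3 := i.isLt
          show (i.1 + 1) % 3 = ((i + 1) : Fin 3).1
          rw [Fin.add_def]
          norm_num
        have := carc i
        rw [hc3] at this
        exact absurd this (h.2.2.1 _ _ hfi)
      · -- k = 4
        exact ⟨c, ⟨by omega, cinj, carc⟩⟩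
    · -- k ≥ 5
      have a01 := carc ⟨0, by omega⟩
      rw [hcyc 0 (by omega) (by omega)] at a01
      have a12 := carc ⟨1, by omega⟩
      rw [hcyc 1 (by omega) (by omega)] at a12
      have a23 := carc ⟨2, by omega⟩
      rw [hcyc 2 (by omega) (by omega)] at a23
      have f01 := hfne _ _ a01
      have f12 := hfne _ _ a12
      have f23 := hfne _ _ a23
      have f03 : f (c ⟨0, by omega⟩) ≠ f (c ⟨3, by omega⟩) := by
        revert f01 f12 f23
        cases f (c ⟨0, by omega⟩) <;> cases f (c ⟨1, by omega⟩) <;>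
          cases f (c ⟨2, by omega⟩) <;> cases f (c ⟨3, by omega⟩) <;> simp
      by_cases hA03 : A (c ⟨3, by omega⟩) (c ⟨0, by omega⟩)
      · refine ⟨fun i => c ⟨i.1, by omega⟩, by omega, ?_, ?_⟩
        · intro i j hij
          apply Fin.ext
          have := congrArg Fin.val (cinj hij)
          simpa using this
        · intro i
          beta_reduce
          have hival : i.1 < 4 := i.isLt
          have hcyc4 : (cyc i).1 = (i.1 + 1) % 4 := rfl
          rcases (by omega : i.1 = 0 ∨ i.1 = 1 ∨ i.1 = 2 ∨ i.1 = 3) with hi | hi | hi | hi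
          · have e1 : (⟨i.1, by omega⟩ : Fin k) = ⟨0, by omega⟩ := Fin.ext hi
            have e2 : (⟨(cyc i).1, by omega⟩ : Fin k) = ⟨1, by omega⟩ := by
              apply Fin.ext; show (cyc i).1 = 1; rw [hcyc4, hi]
            rw [e1, e2]; exact a01
          · have e1 : (⟨i.1, by omega⟩ : Fin k) = ⟨1, by omega⟩ := Fin.ext hi
            have e2 : (⟨(cyc i).1, by omega⟩ : Fin k) = ⟨2, by omega⟩ := by
              apply Fin.ext; show (cyc i).1 = 2; rw [hcyc4, hi]
            rw [e1, e2]; exact a12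
          · have e1 : (⟨i.1, by omega⟩ : Fin k) = ⟨2, by omega⟩ := Fin.ext hi
            have e2 : (⟨(cyc i).1, by omega⟩ : Fin k) = ⟨3, by omega⟩ := by
              apply Fin.ext; show (cyc i).1 = 3; rw [hcyc4, hi]
            rw [e1, e2]; exact a23
          · have e1 : (⟨i.1, by omega⟩ : Fin k) = ⟨3, by omega⟩ := Fin.ext hi
            have e2 : (⟨(cyc i).1, by omega⟩ : Fin k) = ⟨0, by omega⟩ := by
              apply Fin.ext; show (cyc i).1 = 0; rw [hcyc4, hi]
            rw [e1, e2]; exact hA03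
      · have hA03' : A (c ⟨0, by omega⟩) (c ⟨3, by omega⟩) := by
          rcases (h.2.2.2 _ _ f03) with hiff
          by_contra hno
          exact hno (hiff.mpr hA03)
        apply ih (k - 2) (by omega) (fun i : Fin (k - 2) =>
          if hz : i.1 = 0 then c ⟨0, by omega⟩ else c ⟨i.1 + 2, by omega⟩)
        refine ⟨by omega, ?_, ?_⟩
        · intro i j hij
          beta_reduce at hij
          by_cases hi0 : i.1 = 0 <;> by_cases hj0 : j.1 = 0
          · apply Fin.ext; omega
          · rw [dif_pos hi0, dif_neg hj0] at hij
            exact absurd hij (hinj _ _ _ _ (by omega))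
          · rw [dif_neg hi0, dif_pos hj0] at hij
            exact absurd hij (hinj _ _ _ _ (by omega))
          · rw [dif_neg hi0, dif_neg hj0] at hij
            apply Fin.ext
            have := congrArg Fin.val (cinj hij)
            simp at this
            omega
        · intro i
          beta_reduce
          have hik : i.1 < k - 2 := i.isLt
          have hcv : (cyc i).1 = (i.1 + 1) % (k - 2) := rfl
          by_cases hi0 : i.1 = 0
          · have hcv1 : (cyc i).1 = 1 := by rw [hcv, hi0]; exact Nat.mod_eq_of_lt (by omega)
            rw [dif_pos hi0, dif_neg (by omega : ¬ ((cyc i).1 = 0))]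
            have e2 : (⟨(cyc i).1 + 2, by omega⟩ : Fin k) = ⟨3, by omega⟩ :=
              Fin.ext (by show (cyc i).1 + 2 = 3; rw [hcv1])
            rw [e2]
            exact hA03'
          · by_cases hlast : i.1 = k - 3
            · have hcv0 : (cyc i).1 = 0 := by
                rw [hcv, show i.1 + 1 = k - 2 by omega]
                exact Nat.mod_self _
              rw [dif_neg hi0, dif_pos hcv0]
              have aK := carc ⟨k - 1, by omega⟩
              rw [show cyc (⟨k - 1, by omega⟩ : Fin k) = ⟨0, by omega⟩ from
                Fin.ext (by show (k - 1 + 1) % k = 0; rw [show k - 1 + 1 = k by omega]; exact Nat.mod_self k)] at aK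
              have e1 : (⟨i.1 + 2, by omega⟩ : Fin k) = ⟨k - 1, by omega⟩ :=
                Fin.ext (by show i.1 + 2 = k - 1; omega)
              rw [e1]
              exact aK
            · have hcv1 : (cyc i).1 = i.1 + 1 := by
                rw [hcv]; exact Nat.mod_eq_of_lt (by omega)
              rw [dif_neg hi0, dif_neg (by omega : ¬ ((cyc i).1 = 0))]
              have aM := carc ⟨i.1 + 2, by omega⟩
              rw [hcyc (i.1 + 2) (by omega) (by omega)] at aM
              have e2 : (⟨(cyc i).1 + 2, by omega⟩ : Fin k) = ⟨i.1 + 2 + 1, by omega⟩ :=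
                Fin.ext (by show (cyc i).1 + 2 = i.1 + 2 + 1; omega)
              rw [e2]
              exact aM

lemma range3' {W : Type*} (a b c : W) : Set.range ![a, b, c] = {a, b, c} := by
  have h3 := range3 ![a, b, c] 0
  rw [show ((0 : Fin 3) + 1) = 1 from rfl, show ((0 : Fin 3) + 2) = 2 from rfl] at h3
  simpa using h3

lemma set3_ne {W : Type*} {x a b c a' b' c' : W} (hx : x = a ∨ x = b ∨ x = c)
    (h1 : x ≠ a') (h2 : x ≠ b') (h3 : x ≠ c') :
    ({a, b, c} : Set W) ≠ {a', b', c'} := by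
  intro hEq
  have hxm : x ∈ ({a, b, c} : Set W) := by rcases hx with hh | hh | hh <;> simp [hh]
  rw [hEq] at hxm
  simp only [Set.mem_insert_iff, Set.mem_singleton_iff] at hxm
  tauto

lemma fourcycle_contra {V : Type*} {f : V → Bool} {A : V → V → Prop}
    (h : IsBipTournament f A) (T : V → V → Prop) (hT : IsCompletion A T)
    (d : Fin 4 → V) (hd : IsDicycle A 4 d) (c : Fin 3 → V)
    (hu : ∀ c', Aug3 A T c' → Set.range c' = Set.range c) : False := by
  obtain ⟨-, dinj, darc⟩ := hd
  have hfne : ∀ u v, A u v → f u ≠ f v := fun u v hA hf => h.2.2.1 u v hf hA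
  have hcyc4 : ∀ (m : ℕ) (hm : m < 4) (hm1 : m + 1 < 4),
      cyc (⟨m, hm⟩ : Fin 4) = ⟨m + 1, hm1⟩ := fun m hm hm1 => Fin.ext (Nat.mod_eq_of_lt hm1)
  set v0 := d ⟨0, by omega⟩ with hv0
  set v1 := d ⟨1, by omega⟩ with hv1
  set v2 := d ⟨2, by omega⟩ with hv2
  set v3 := d ⟨3, by omega⟩ with hv3
  have a01 := darc ⟨0, by omega⟩
  rw [hcyc4 0 (by omega) (by omega)] at a01
  have a12 := darc ⟨1, by omega⟩
  rw [hcyc4 1 (by omega) (by omega)] at a12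
  have a23 := darc ⟨2, by omega⟩
  rw [hcyc4 2 (by omega) (by omega)] at a23
  have a30 := darc ⟨3, by omega⟩
  rw [show cyc (⟨3, by omega⟩ : Fin 4) = ⟨0, by omega⟩ from
    Fin.ext (by show (3 + 1) % 4 = 0; norm_num)] at a30
  have t01 : T v0 v1 := hT.2 _ _ a01
  have t12 : T v1 v2 := hT.2 _ _ a12
  have t23 : T v2 v3 := hT.2 _ _ a23
  have t30 : T v3 v0 := hT.2 _ _ a30
  have f01 := hfne _ _ a01
  have f12 := hfne _ _ a12
  have f23 := hfne _ _ a23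
  have f02 : f v0 = f v2 := by
    revert f01 f12
    cases f v0 <;> cases f v1 <;> cases f v2 <;> simp
  have f13 : f v1 = f v3 := by
    revert f12 f23
    cases f v1 <;> cases f v2 <;> cases f v3 <;> simp
  have hdij : ∀ (i j : ℕ) (hi : i < 4) (hj : j < 4), i ≠ j →
      d ⟨i, hi⟩ ≠ d ⟨j, hj⟩ := by
    intro i j hi hj hij heq
    exact hij (congrArg Fin.val (dinj heq))
  have n01 : v0 ≠ v1 := hdij 0 1 (by omega) (by omega) (by omega)
  have n02 : v0 ≠ v2 := hdij 0 2 (by omega) (by omega) (by omega)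
  have n03 : v0 ≠ v3 := hdij 0 3 (by omega) (by omega) (by omega)
  have n12 : v1 ≠ v2 := hdij 1 2 (by omega) (by omega) (by omega)
  have n13 : v1 ≠ v3 := hdij 1 3 (by omega) (by omega) (by omega)
  have n23 : v2 ≠ v3 := hdij 2 3 (by omega) (by omega) (by omega)
  have nA02 : ¬ A v0 v2 := h.2.2.1 _ _ f02
  have nA20 : ¬ A v2 v0 := h.2.2.1 _ _ f02.symm
  have nA13 : ¬ A v1 v3 := h.2.2.1 _ _ f13
  have nA31 : ¬ A v3 v1 := h.2.2.1 _ _ f13.symm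
  have mkaug : ∀ x y z : V, x ≠ y → y ≠ z → z ≠ x → T x y → T y z → T z x →
      ¬ A z x → Aug3 A T ![x, y, z] := by
    intro x y z nxy nyz nzx txy tyz tzx nazx
    refine ⟨tri3_inj nxy nyz (fun hh => nzx hh.symm), ?_, ⟨2, ?_⟩⟩
    · intro i; fin_cases i <;> simpa
    · rw [show ((2 : Fin 3) + 1) = 0 from rfl]
      simpa using nazx
  have w1 : ∃ w : Fin 3 → V, Aug3 A T w ∧ (Set.range w = {v2, v3, v0} ∨
      Set.range w = {v0, v1, v2}) := by
    by_cases hc1 : T v0 v2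
    · exact ⟨![v2, v3, v0], mkaug v2 v3 v0 n23 (fun hh => n03 hh.symm) n02 t23 t30 hc1 nA02,
        Or.inl (range3' _ _ _)⟩
    · have hc1' : T v2 v0 := by
        by_contra hno
        exact hc1 ((hT.1.2 v0 v2 n02).mpr hno)
      exact ⟨![v0, v1, v2], mkaug v0 v1 v2 n01 n12 (fun hh => n02 hh.symm) t01 t12 hc1' nA20,
        Or.inr (range3' _ _ _)⟩
  have w2 : ∃ w : Fin 3 → V, Aug3 A T w ∧ (Set.range w = {v3, v0, v1} ∨
      Set.range w = {v1, v2, v3}) := by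
    by_cases hc2 : T v1 v3
    · exact ⟨![v3, v0, v1], mkaug v3 v0 v1 (fun hh => n03 hh.symm) n01 n13 t30 t01 hc2 nA13,
        Or.inl (range3' _ _ _)⟩
    · have hc2' : T v3 v1 := by
        by_contra hno
        exact hc2 ((hT.1.2 v1 v3 n13).mpr hno)
      exact ⟨![v1, v2, v3], mkaug v1 v2 v3 n12 n23 (fun hh => n13 hh.symm) t12 t23 hc2' nA31,
        Or.inr (range3' _ _ _)⟩
  obtain ⟨wa, hwa, hra⟩ := w1
  obtain ⟨wb, hwb, hrb⟩ := w2
  have hr : Set.range wa = Set.range wb := (hu _ hwa).trans (hu _ hwb).symm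
  rcases hra with h1 | h1 <;> rcases hrb with h2 | h2 <;> rw [h1, h2] at hr
  · exact set3_ne (x := v2) (Or.inl rfl) (fun hh => n23 hh) (fun hh => n02 hh.symm)
      (fun hh => n12 hh.symm) hr
  · exact set3_ne (x := v0) (Or.inr (Or.inr rfl)) n01 n02 n03 hr
  · exact set3_ne (x := v2) (Or.inr (Or.inr rfl)) (fun hh => n23 hh) (fun hh => n02 hh.symm)
      (fun hh => n12 hh.symm) hr
  · exact set3_ne (x := v0) (Or.inl rfl) n01 n02 n03 hr

lemma topo {V : Type*} [Fintype V] {f : V → Bool} {A : V → V → Prop}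
    (h : IsBipTournament f A) (hac : Acyclic A) :
    ∃ σ : V ≃ Fin (Fintype.card V), ∀ u v, A u v → (σ u : ℕ) < σ v := by
  classical
  have hTG := acyclic_noTG h hac
  haveI : IsPartialOrder V (Relation.ReflTransGen A) := {
    refl := fun a => Relation.ReflTransGen.refl
    trans := fun a b c hab hbc => hab.trans hbc
    antisymm := by
      intro a b hab hba
      by_contra hne
      have h1 : Relation.TransGen A a b :=
        (Relation.reflTransGen_iff_eq_or_transGen.mp hab).resolve_left (fun hh => hne hh.symm)
      have h2 : Relation.TransGen A b a :=
        (Relation.reflTransGen_iff_eq_or_transGen.mp hba).resolve_left (fun hh => hne hh)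
      exact hTG a (h1.trans h2) }
  obtain ⟨s, hs, hrs⟩ := extend_partialOrder (Relation.ReflTransGen A)
  haveI := hs
  letI : LinearOrder V := {
    le := s
    le_refl := fun a => refl_of s a
    le_trans := fun a b c => trans_of s
    le_antisymm := fun a b h1 h2 => antisymm_of s h1 h2
    le_total := fun a b => total_of s a b
    toDecidableLE := Classical.decRel s }
  let σ := (monoEquivOfFin V rfl).symm
  refine ⟨σ.toEquiv, ?_⟩
  intro u v hA
  have hne : u ≠ v := fun hh => (h.2.2.1 u u rfl) (by rw [hh]; rwa [hh] at hA)
  have hle : s u v := hrs _ _ (Relation.ReflTransGen.single hA)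
  have hlt : u < v := lt_of_le_of_ne hle hne
  exact (OrderIso.lt_iff_lt σ).mpr hlt

theorem stmt_15 {V : Type*} [Fintype V] (n : ℕ) (hcard : Fintype.card V = n)
    (f : V → Bool) (A : V → V → Prop) (h : IsBipTournament f A) :
    (∃ T : V → V → Prop, IsCompletion A T ∧
      ∃ c : Fin 3 → V, Aug3 A T c ∧
        ∀ c' : Fin 3 → V, Aug3 A T c' → Set.range c' = Set.range c) ↔
    (Acyclic A ∧ ∀ g : ℕ → ℕ, g = x1fun ∨ g = x2fun →
      ¬ ∃ e : V ≃ Fin n, ∀ u v, A u v ↔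
          (g (e u) < g (e v) ∧ g (e u) % 2 ≠ g (e v) % 2)) := by
  subst hcard
  constructor
  · rintro ⟨T, hT, c, hc, hu⟩
    constructor
    · -- acyclicity
      rintro ⟨k, cc, hdc⟩
      obtain ⟨d, hd4⟩ := toFour h k cc hdc
      exact fourcycle_contra h T hT d hd4 c hu
    · -- not isomorphic to exceptional digraphs
      rintro g hg ⟨e, he⟩
      have hgsm : StrictMono g := by rcases hg with rfl | rfl; exacts [x1sm, x2sm]
      have hgalt : ∀ k, g k % 2 ≠ g (k + 2) % 2 := by
        rcases hg with rfl | rfl; exacts [x1alt, x2alt]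
      set p : Fin (Fintype.card V) → Bool := fun i => decide (g i % 2 = 1) with hp
      have hpar : ∀ i j : Fin (Fintype.card V), (p i ≠ p j) ↔ (g i % 2 ≠ g j % 2) := by
        intro i j
        rcases Nat.mod_two_eq_zero_or_one (g i) with h1 | h1 <;>
          rcases Nat.mod_two_eq_zero_or_one (g j) with h2 | h2 <;>
          simp [hp, h1, h2]
      have halt : ∀ k (hk : k + 2 < Fintype.card V), p ⟨k, by omega⟩ ≠ p ⟨k + 2, hk⟩ := by
        intro k hk
        exact (hpar ⟨k, by omega⟩ ⟨k + 2, hk⟩).mpr (hgalt k)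
      have hAB : ∀ i j : Fin (Fintype.card V), Brel p i j ↔ A (e.symm i) (e.symm j) := by
        intro i j
        rw [he (e.symm i) (e.symm j), e.apply_symm_apply, e.apply_symm_apply]
        constructor
        · rintro ⟨h1, h2⟩
          exact ⟨hgsm h1, (hpar i j).mp h2⟩
        · rintro ⟨h1, h2⟩
          exact ⟨hgsm.lt_iff_lt.mp h1, (hpar i j).mpr h2⟩
      obtain ⟨T', hT', c', hc', hu'⟩ :=
        transport e.symm (Brel p) A hAB ⟨T, hT, c, hc, hu⟩
      exact core_II p halt T' hT' c' hc' hu'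
  · rintro ⟨hac, hniso⟩
    obtain ⟨σ, hσ⟩ := topo h hac
    set p : Fin (Fintype.card V) → Bool := fun i => f (σ.symm i) with hp
    have hA' : ∀ u v, A u v ↔ Brel p (σ u) (σ v) := by
      intro u v
      have e1 : p (σ u) = f u := congrArg f (σ.symm_apply_apply u)
      have e2 : p (σ v) = f v := congrArg f (σ.symm_apply_apply v)
      constructor
      · intro hA
        refine ⟨hσ u v hA, ?_⟩
        rw [e1, e2]
        exact fun hf => h.2.2.1 u v hf hA
      · rintro ⟨hlt, hpne⟩
        rw [e1, e2] at hpne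
        by_contra hno
        have hAvu : A v u := by
          by_contra hnvu
          exact hno ((h.2.2.2 u v hpne).mpr hnvu)
        have := hσ v u hAvu
        omega
    by_cases hex : ∃ k, ∃ hk : k + 2 < Fintype.card V, p ⟨k, by omega⟩ = p ⟨k + 2, hk⟩
    · obtain ⟨k, hk, hpk⟩ := hex
      exact transport σ A (Brel p) hA' (core_I p k hk hpk)
    · push_neg at hex
      obtain ⟨g, hg, hpar⟩ := pattern p hex
      exfalso
      apply hniso g hg
      refine ⟨σ, ?_⟩
      intro u v
      rw [hA' u v]
      have hgsm : StrictMono g := by rcases hg with rfl | rfl; exacts [x1sm, x2sm]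
      constructor
      · rintro ⟨h1, h2⟩
        exact ⟨hgsm h1, (hpar _ _).mp h2⟩
      · rintro ⟨h1, h2⟩
        exact ⟨hgsm.lt_iff_lt.mp h1, (hpar _ _).mpr h2⟩
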